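/- Let m ≥ 1, let 0 ≤ ρ < 1, let Σ be the m×m equicorrelation matrix with parameter ρ, and let 0 < τ < 1. Then the 2m×2m block matrix Σ(τ) = [[Σ, τΣ],[τΣ, τΣ]] is invertible and its inverse Θ(τ) satisfies ‖Θ(τ)‖_{ℓ∞} ≤ (2/((1−τ)(1−ρ)))·max(2, (τ+1)/τ). -/

import Mathlib

set_option maxHeartbeats 1000000

/-- For the m×m equicorrelation matrix Σ with parameter 0 ≤ ρ < 1 (m ≥ 1)
and 0 < τ < 1, the block matrix Σ(τ) = [[Σ, τΣ],[τΣ, τΣ]] is invertible and its inverse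
Θ(τ) satisfies ‖Θ(τ)‖_{ℓ∞} ≤ (2/((1−τ)(1−ρ)))·max(2, (τ+1)/τ). -/
theorem stmt_3 (m : ℕ) (hm : 1 ≤ m) (ρ : ℝ) (hρ0 : 0 ≤ ρ) (hρ1 : ρ < 1)
    (S : Matrix (Fin m) (Fin m) ℝ)
    (hS : ∀ i j, S i j = if i = j then 1 else ρ)
    (τ : ℝ) (hτ0 : 0 < τ) (hτ1 : τ < 1) :
    IsUnit (Matrix.fromBlocks S (τ • S) (τ • S) (τ • S)) ∧
    (⨆ i, ∑ j, |(Matrix.fromBlocks S (τ • S) (τ • S) (τ • S))⁻¹ i j|)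
      ≤ (2 / ((1 - τ) * (1 - ρ))) * max 2 ((τ + 1) / τ) := by
  have hmR : (1:ℝ) ≤ (m:ℝ) := by exact_mod_cast hm
  have h1ρ : (0:ℝ) < 1 - ρ := by linarith
  have h1τ : (0:ℝ) < 1 - τ := by linarith
  set c : ℝ := 1 + ((m:ℝ) - 1) * ρ with hc_def
  have hc : (0:ℝ) < c := by nlinarith
  set p : ℝ := 1 / (1 - ρ) with hp_def
  set q : ℝ := -ρ / ((1 - ρ) * c) with hq_def
  set T : Matrix (Fin m) (Fin m) ℝ := Matrix.of fun i j => if i = j then p + q else q with hT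
  -- summation helpers
  have key1 : ∀ (A B : ℝ) (i : Fin m),
      ∑ k : Fin m, (if k = i then A else B) = A + ((m:ℝ) - 1) * B := by
    intro A B i
    have : ∀ k : Fin m, (if k = i then A else B) = B + (if k = i then A - B else 0) := by
      intro k; split <;> ring
    simp only [this, Finset.sum_add_distrib, Finset.sum_const, Finset.card_univ,
      Fintype.card_fin, Finset.sum_ite_eq' Finset.univ i (fun _ => A - B),
      Finset.mem_univ, if_true, nsmul_eq_mul]
    ring
  have key2 : ∀ (A B C : ℝ) (i j : Fin m), i ≠ j →
      ∑ k : Fin m, (if k = i then A else if k = j then B else C)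
        = A + B + ((m:ℝ) - 2) * C := by
    intro A B C i j hij
    have : ∀ k : Fin m, (if k = i then A else if k = j then B else C)
        = C + (if k = i then A - C else 0) + (if k = j then B - C else 0) := by
      intro k
      rcases eq_or_ne k i with rfl | h1
      · simp [hij, Ne.symm]
      · rcases eq_or_ne k j with rfl | h2
        · simp [h1]
        · simp [h1, h2]
    simp only [this, Finset.sum_add_distrib, Finset.sum_const, Finset.card_univ,
      Fintype.card_fin, Finset.sum_ite_eq' Finset.univ i (fun _ => A - C),
      Finset.sum_ite_eq' Finset.univ j (fun _ => B - C),
      Finset.mem_univ, if_true, nsmul_eq_mul]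
    ring
  have hcne : c ≠ 0 := ne_of_gt hc
  have h1ρne : (1:ℝ) - ρ ≠ 0 := ne_of_gt h1ρ
  have hST : S * T = 1 := by
    ext i j
    rw [Matrix.mul_apply, Matrix.one_apply]
    rcases eq_or_ne i j with rfl | hij
    · have : ∀ k : Fin m, S i k * T k i = (if k = i then p + q else ρ * q) := by
        intro k
        rw [hS]
        show (if i = k then 1 else ρ) * (if k = i then p + q else q) = _
        rcases eq_or_ne k i with rfl | h
        · simp
        · simp [h, Ne.symm h]
      rw [Finset.sum_congr rfl (fun k _ => this k), key1, if_pos rfl, hp_def, hq_def]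
      field_simp
      ring
    · have : ∀ k : Fin m, S i k * T k j
          = (if k = i then q else if k = j then ρ * (p + q) else ρ * q) := by
        intro k
        rw [hS]
        show (if i = k then 1 else ρ) * (if k = j then p + q else q) = _
        rcases eq_or_ne k i with rfl | h1
        · rw [if_pos rfl, if_pos rfl, if_neg hij, one_mul]
        · rw [if_neg (Ne.symm h1), if_neg h1]
          rcases eq_or_ne k j with rfl | h2
          · rw [if_pos rfl, if_pos rfl]
          · rw [if_neg h2, if_neg h2]
      rw [Finset.sum_congr rfl (fun k _ => this k), key2 _ _ _ _ _ hij, if_neg hij,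
        hp_def, hq_def]
      field_simp
      ring
  set α : ℝ := 1 / (1 - τ) with hα_def
  set β : ℝ := -(1 / (1 - τ)) with hβ_def
  set γ : ℝ := 1 / (τ * (1 - τ)) with hγ_def
  set Θ : Matrix (Fin m ⊕ Fin m) (Fin m ⊕ Fin m) ℝ :=
    Matrix.fromBlocks (α • T) (β • T) (β • T) (γ • T) with hΘ
  have hτne : τ ≠ 0 := ne_of_gt hτ0
  have h1τne : (1:ℝ) - τ ≠ 0 := ne_of_gt h1τ
  have e1 : α + τ * β = 1 := by rw [hα_def, hβ_def]; field_simp; ring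
  have e2 : β + τ * γ = 0 := by rw [hβ_def, hγ_def]; field_simp; ring
  have e3 : τ * α + τ * β = 0 := by rw [hα_def, hβ_def]; ring
  have e4 : τ * β + τ * γ = 1 := by rw [hβ_def, hγ_def]; field_simp; ring
  have hmul : Matrix.fromBlocks S (τ • S) (τ • S) (τ • S) * Θ = 1 := by
    rw [hΘ, Matrix.fromBlocks_multiply]
    have b1 : S * (α • T) + (τ • S) * (β • T) = 1 := by
      rw [Matrix.mul_smul, Matrix.smul_mul, Matrix.mul_smul, smul_smul, ← add_smul, e1,
        hST, one_smul]
    have b2 : S * (β • T) + (τ • S) * (γ • T) = 0 := by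
      rw [Matrix.mul_smul, Matrix.smul_mul, Matrix.mul_smul, smul_smul, ← add_smul, e2,
        hST, zero_smul]
    have b3 : (τ • S) * (α • T) + (τ • S) * (β • T) = 0 := by
      rw [Matrix.smul_mul, Matrix.mul_smul, Matrix.smul_mul, Matrix.mul_smul, smul_smul,
        smul_smul, ← add_smul, e3, hST, zero_smul]
    have b4 : (τ • S) * (β • T) + (τ • S) * (γ • T) = 1 := by
      rw [Matrix.smul_mul, Matrix.mul_smul, Matrix.smul_mul, Matrix.mul_smul, smul_smul,
        smul_smul, ← add_smul, e4, hST, one_smul]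
    rw [b1, b2, b3, b4, Matrix.fromBlocks_one]
  refine ⟨?_, ?_⟩
  · exact @isUnit_of_invertible _ _ _ (invertibleOfRightInverse _ _ hmul)
  · rw [Matrix.inv_eq_right_inv hmul]
    have hq0 : q ≤ 0 := by
      rw [hq_def]
      apply div_nonpos_of_nonpos_of_nonneg <;> nlinarith
    have hc1 : (1:ℝ) ≤ c := by
      rw [hc_def]; nlinarith [mul_nonneg (sub_nonneg.mpr hmR) hρ0]
    have hpq0 : 0 ≤ p + q := by
      rw [hp_def, hq_def]
      rw [div_add_div _ _ h1ρne (by positivity)]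
      apply div_nonneg
      · nlinarith [mul_lt_mul_of_pos_left (show ρ < c by linarith) h1ρ]
      · positivity
    have hR : ∀ a : Fin m, ∑ j : Fin m, |T a j| ≤ 2 / (1 - ρ) := by
      intro a
      have : ∀ j : Fin m, |T a j| = (if j = a then p + q else -q) := by
        intro j
        show |(if a = j then p + q else q)| = _
        rcases eq_or_ne j a with rfl | h
        · simp [abs_of_nonneg hpq0]
        · simp [h, Ne.symm h, abs_of_nonpos hq0]
      rw [Finset.sum_congr rfl (fun j _ => this j), key1, hp_def, hq_def]
      have keyv : 1/(1-ρ) + -ρ/((1-ρ)*c) + ((m:ℝ)-1) * -(-ρ/((1-ρ)*c))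
          = (c + ((m:ℝ)-2)*ρ) / ((1-ρ)*c) := by
        field_simp
        ring
      rw [keyv, div_le_div_iff₀ (by positivity) h1ρ]
      have h3 : c + ((m:ℝ)-2)*ρ ≤ 2*c := by rw [hc_def]; nlinarith
      linarith only [mul_le_mul_of_nonneg_right h3 h1ρ.le]
    have hαβ : |α| + |β| = 2 / (1 - τ) := by
      rw [hα_def, hβ_def, abs_neg, abs_of_nonneg (by positivity : (0:ℝ) ≤ 1/(1-τ))]
      ring
    have hβγ : |β| + |γ| = (τ + 1) / (τ * (1 - τ)) := by
      rw [hβ_def, hγ_def, abs_neg, abs_of_nonneg (by positivity : (0:ℝ) ≤ 1/(1-τ)),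
        abs_of_nonneg (by positivity : (0:ℝ) ≤ 1/(τ*(1-τ)))]
      field_simp
    have hRpos : (0:ℝ) ≤ 2 / (1 - ρ) := by positivity
    haveI : Nonempty (Fin m) := ⟨⟨0, hm⟩⟩
    apply ciSup_le
    rintro (a | a)
    · rw [Fintype.sum_sum_type]
      simp only [hΘ, Matrix.fromBlocks_apply₁₁, Matrix.fromBlocks_apply₁₂,
        Matrix.smul_apply, smul_eq_mul, abs_mul]
      rw [← Finset.mul_sum, ← Finset.mul_sum, ← add_mul]
      have : (|α| + |β|) * ∑ j : Fin m, |T a j| ≤ (2/(1-τ)) * (2/(1-ρ)) := by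
        rw [hαβ]
        exact mul_le_mul_of_nonneg_left (hR a) (by positivity)
      refine le_trans this ?_
      have h2le : (2:ℝ) ≤ max 2 ((τ+1)/τ) := le_max_left _ _
      have heq : (2/(1-τ)) * (2/(1-ρ)) = (2 / ((1-τ)*(1-ρ))) * 2 := by
        field_simp
      rw [heq]
      exact mul_le_mul_of_nonneg_left h2le (by positivity)
    · rw [Fintype.sum_sum_type]
      simp only [hΘ, Matrix.fromBlocks_apply₂₁, Matrix.fromBlocks_apply₂₂,
        Matrix.smul_apply, smul_eq_mul, abs_mul]
      rw [← Finset.mul_sum, ← Finset.mul_sum, ← add_mul]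
      have : (|β| + |γ|) * ∑ j : Fin m, |T a j|
          ≤ ((τ+1)/(τ*(1-τ))) * (2/(1-ρ)) := by
        rw [hβγ]
        exact mul_le_mul_of_nonneg_left (hR a) (by positivity)
      refine le_trans this ?_
      have h2le : (τ+1)/τ ≤ max 2 ((τ+1)/τ) := le_max_right _ _
      have heq : ((τ+1)/(τ*(1-τ))) * (2/(1-ρ)) = (2 / ((1-τ)*(1-ρ))) * ((τ+1)/τ) := by
        field_simp
      rw [heq]
      exact mul_le_mul_of_nonneg_left h2le (by positivity)
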